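/- Let f_1,...,f_n : X → Y be maps, let e_n : Y^{J_n} → Y^n be the n-legged path fibration, and let q : P → X be the pullback of e_n along F = (f_1,...,f_n) : X → Y^n. Then D(f_1,...,f_n) = secat(q). -/

import Mathlib

open Set

/-- The `n`-th homotopic distance of maps `f 0, …, f (n-1) : X → Y`:
the least `k` admitting an open cover `U 0, …, U k` of `X` on each element of
which all the maps are pairwise homotopic; `∞` if no such cover exists. -/
noncomputable def homDist {X Y : Type*} [TopologicalSpace X] [TopologicalSpace Y]
    {n : ℕ} (f : Fin n → C(X, Y)) : ℕ∞ :=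
  sInf ((fun k : ℕ => (k : ℕ∞)) '' {k | ∃ U : Fin (k + 1) → Set X,
    (∀ j, IsOpen (U j)) ∧ (⋃ j, U j) = Set.univ ∧
    ∀ j i i', ((f i).restrict (U j)).Homotopic ((f i').restrict (U j))})

/-- The sectional category of a map `q : E → B`: the least `k` such that `B`
has an open cover of `k+1` open sets each admitting a continuous local section. -/
noncomputable def secat {E B : Type*} [TopologicalSpace E] [TopologicalSpace B]
    (q : C(E, B)) : ℕ∞ :=
  sInf ((fun k : ℕ => (k : ℕ∞)) '' {k | ∃ U : Fin (k + 1) → Set B,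
    (∀ j, IsOpen (U j)) ∧ (⋃ j, U j) = Set.univ ∧
    ∀ j, ∃ s : C(U j, E), ∀ x : U j, q (s x) = (x : B)})

/-- The space `X^{J_n}` of `n`-legged paths in `X`: `n` paths with a common
initial point (the wedge of `n` intervals glued at `0`, mapped into `X`). -/
abbrev NLegged (X : Type*) [TopologicalSpace X] (n : ℕ) : Type _ :=
  {γ : Fin n → C(unitInterval, X) // ∀ i j : Fin n, γ i 0 = γ j 0}

/-- The fibration `e_n : X^{J_n} → X^n` evaluating at the `n` free endpoints. -/
def enMap (X : Type*) [TopologicalSpace X] (n : ℕ) :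
    C(NLegged X n, Fin n → X) :=
  ⟨fun γ i => (γ.1 i) 1, by
    apply continuous_pi; intro i
    exact (continuous_eval_const (1 : unitInterval)).comp
      ((continuous_apply i).comp continuous_subtype_val)⟩


open unitInterval in
lemma key_sec_iff {X Y : Type*} [TopologicalSpace X] [TopologicalSpace Y] {n : ℕ}
    (f : Fin n → C(X, Y)) (U : Set X) :
    (∃ s : C(U, {p : X × NLegged Y n // ∀ i, (p.2.1 i) 1 = f i p.1}),
       ∀ x : U, (s x).1.1 = (x : X)) ↔
    ∀ i i', ((f i).restrict U).Homotopic ((f i').restrict U) := by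
  constructor
  · rintro ⟨s, hs⟩ i i'
    -- the leg maps as a continuous family
    have hγ : ∀ i : Fin n, Continuous fun x : U => (s x).1.2.1 i :=
      fun i => (continuous_apply i).comp (continuous_subtype_val.comp
        (continuous_snd.comp (continuous_subtype_val.comp s.continuous)))
    -- the common-initial-point map
    have hkey : ∀ i : Fin n, ((f i).restrict U).Homotopic
        ⟨fun x => ((s x).1.2.1 i) 0,
          (continuous_eval_const 0).comp (hγ i)⟩ := by
      intro i
      refine ⟨⟨⟨fun p => ((s p.2).1.2.1 i) (σ p.1), ?_⟩, ?_, ?_⟩⟩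
      · exact continuous_eval.comp
          (((hγ i).comp continuous_snd).prodMk
            (continuous_symm.comp continuous_fst))
      · intro x
        simp only [unitInterval.symm_zero]
        rw [(s x).2 i, hs x]
        rfl
      · intro x
        simp [unitInterval.symm_one]
    have hgeq : (⟨fun x => ((s x).1.2.1 i) 0,
          (continuous_eval_const 0).comp (hγ i)⟩ : C(U, Y)) =
        ⟨fun x => ((s x).1.2.1 i') 0,
          (continuous_eval_const 0).comp (hγ i')⟩ := by
      ext x
      exact (s x).1.2.2 i i'
    exact (hkey i).trans (hgeq ▸ (hkey i').symm)
  · intro h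
    rcases Nat.eq_zero_or_pos n with hn | hn
    · subst hn
      refine ⟨⟨fun x => ⟨⟨(x : X), ⟨finZeroElim, fun i => i.elim0⟩⟩,
          fun i => i.elim0⟩, ?_⟩, fun x => rfl⟩
      exact Continuous.subtype_mk
        (continuous_subtype_val.prodMk continuous_const) _
    · set i0 : Fin n := ⟨0, hn⟩ with hi0
      have H : ∀ i : Fin n, ((f i).restrict U).Homotopy ((f i0).restrict U) :=
        fun i => (h i i0).some
      -- the family of legs
      let K : Fin n → C(U × unitInterval, Y) := fun i =>
        (H i).toContinuousMap.comp
          ⟨fun p => (σ p.2, p.1),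
            (continuous_symm.comp continuous_snd).prodMk continuous_fst⟩
      refine ⟨⟨fun x => ⟨⟨(x : X), ⟨fun i => (K i).curry x, ?_⟩⟩, ?_⟩, ?_⟩,
          fun x => rfl⟩
      · intro i j
        show (K i) (x, 0) = (K j) (x, 0)
        simp only [K, ContinuousMap.comp_apply, ContinuousMap.coe_mk,
          unitInterval.symm_zero]
        rw [show ((H i).toContinuousMap (1, x) : Y) = (H i) (1, x) from rfl,
          show ((H j).toContinuousMap (1, x) : Y) = (H j) (1, x) from rfl,
          (H i).apply_one, (H j).apply_one]
      · intro i
        show (K i) (x, 1) = f i (x : X)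
        simp only [K, ContinuousMap.comp_apply, ContinuousMap.coe_mk,
          unitInterval.symm_one]
        rw [show ((H i).toContinuousMap (0, x) : Y) = (H i) (0, x) from rfl,
          (H i).apply_zero]
        rfl
      · refine Continuous.subtype_mk (Continuous.prodMk continuous_subtype_val
          (Continuous.subtype_mk (continuous_pi fun i => ?_) _)) _
        exact (K i).curry.continuous

/-- `D(f₁, …, fₙ) = secat(q)`, where `q : P → X` is the pullback of the
`n`-legged path fibration `e_n : Y^{J_n} → Y^n` along `F = (f₁, …, fₙ)`. -/
theorem homDist_eq_secat_pullback {X Y : Type*} [TopologicalSpace X]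
    [TopologicalSpace Y] {n : ℕ} (f : Fin n → C(X, Y)) :
    homDist f =
      secat (E := {p : X × NLegged Y n // ∀ i, (p.2.1 i) 1 = f i p.1})
        ⟨fun p => p.1.1, continuous_fst.comp continuous_subtype_val⟩ := by
  have hset : {k : ℕ | ∃ U : Fin (k + 1) → Set X,
      (∀ j, IsOpen (U j)) ∧ (⋃ j, U j) = Set.univ ∧
      ∀ j i i', ((f i).restrict (U j)).Homotopic ((f i').restrict (U j))} =
    {k : ℕ | ∃ U : Fin (k + 1) → Set X,
      (∀ j, IsOpen (U j)) ∧ (⋃ j, U j) = Set.univ ∧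
      ∀ j, ∃ s : C(U j, {p : X × NLegged Y n // ∀ i, (p.2.1 i) 1 = f i p.1}),
        ∀ x : U j, (⟨fun p => p.1.1,
          continuous_fst.comp continuous_subtype_val⟩ :
            C({p : X × NLegged Y n // ∀ i, (p.2.1 i) 1 = f i p.1}, X))
          (s x) = (x : X)} := by
    ext k
    simp only [Set.mem_setOf_eq]
    constructor
    · rintro ⟨U, hU, hcov, hh⟩
      exact ⟨U, hU, hcov, fun j => (key_sec_iff f (U j)).2 (hh j)⟩
    · rintro ⟨U, hU, hcov, hs⟩
      exact ⟨U, hU, hcov, fun j => (key_sec_iff f (U j)).1 (hs j)⟩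
  rw [homDist, secat, hset]
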